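/- Let C be the dual-pivot quickselect cost array defined from the 'smaller pivot first' partitioning costs P^sf by the standard recurrence. Then for every n ≥ 3, the average number of comparisons to select the smallest element satisfies C(n,1) = C(n,n) = (5/2)·n − (8/3)·H_n + 1/18. -/

import Mathlib

open Finset

/-- Harmonic numbers `H_n = ∑_{k=1}^n 1/k`. -/
noncomputable def H (n : ℕ) : ℝ := ∑ k ∈ Finset.Icc 1 n, (1 : ℝ) / k

/-- Alternating harmonic numbers `H^alt_n = ∑_{k=1}^n (-1)^k/k`. -/
noncomputable def Halt (n : ℕ) : ℝ := ∑ k ∈ Finset.Icc 1 n, (-1 : ℝ) ^ k / k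

/-- The dual-pivot quickselect cost array defined from expected partitioning
costs `P` by the standard recurrence:  `C(n,j) = 0` whenever `n ≤ 1` or `j < 1`
or `j > n`; and for `n ≥ 2` and `1 ≤ j ≤ n`,
`C(n,j) = P(n) + (2/(n(n−1)))·( ∑_{s=j}^{n−2} (n−1−s)·C(s,j)
  + ∑_{m=1}^{n−2} ∑_{s=max(0,j−m−1)}^{min(j−2, n−m−2)} C(m, j−s−1)
  + ∑_{ℓ=n−j+1}^{n−2} (n−1−ℓ)·C(ℓ, n−j+1) )`.
(The `attach` is only needed for the termination proof.) -/
noncomputable def qsCost (P : ℕ → ℝ) : ℕ → ℤ → ℝ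
  | n, j =>
    if n ≤ 1 ∨ j < 1 ∨ (n : ℤ) < j then 0
    else
      P n + 2 / ((n : ℝ) * ((n : ℝ) - 1)) *
        ((∑ s ∈ (Finset.Icc j.toNat (n - 2)).attach,
            ((n : ℝ) - 1 - (s : ℕ)) * qsCost P (s : ℕ) j) +
         (∑ m ∈ (Finset.Icc 1 (n - 2)).attach,
            ∑ s ∈ Finset.Icc (max 0 (j - ((m : ℕ) : ℤ) - 1))
                (min (j - 2) ((n : ℤ) - ((m : ℕ) : ℤ) - 2)),
              qsCost P (m : ℕ) (j - s - 1)) +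
         (∑ l ∈ (Finset.Icc ((n : ℤ) - j + 1).toNat (n - 2)).attach,
            ((n : ℝ) - 1 - (l : ℕ)) * qsCost P (l : ℕ) ((n : ℤ) - j + 1)))
  termination_by n j => n
  decreasing_by
    · have hs := s.2; simp only [Finset.mem_Icc] at hs; omega
    · have hm := m.2; simp only [Finset.mem_Icc] at hm; omega
    · have hl := l.2; simp only [Finset.mem_Icc] at hl; omega

/-- Expected partitioning costs of the strategy "smaller pivot first":
`P^sf(0) = P^sf(1) = 0` and `P^sf(n) = (5/3)n − 7/3` for `n ≥ 2`. -/
noncomputable def Psf (n : ℕ) : ℝ := if n ≤ 1 then 0 else 5 / 3 * (n : ℝ) - 7 / 3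

noncomputable def cs (n : ℕ) : ℝ :=
  if n ≤ 1 then 0 else if n = 2 then 1 else 5/2*(n:ℝ) - 8/3 * H n + 1/18

noncomputable def Sig (m : ℕ) : ℝ :=
  if m ≤ 1 then 0 else 5/4*(m:ℝ)^2 + 143/36*(m:ℝ) + 1/18 - 8/3*((m:ℝ)+1)*H m

noncomputable def WF (n : ℕ) : ℝ := (n:ℝ)*((n:ℝ)-1)/2 * (cs n - Psf n)

lemma H_succ (n : ℕ) : H (n+1) = H n + 1/((n:ℝ)+1) := by
  unfold H
  rw [Finset.sum_Icc_succ_top (by omega)]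
  push_cast; ring

lemma H_one : H 1 = 1 := by unfold H; simp
lemma H_two : H 2 = 3/2 := by
  rw [show H 2 = H (1+1) from rfl, H_succ, H_one]; norm_num

lemma Lsig : ∀ m : ℕ, ∑ s ∈ Finset.Icc 1 m, cs s = Sig m := by
  intro m
  induction m with
  | zero => simp [Sig]
  | succ m ih =>
    rw [Finset.sum_Icc_succ_top (by omega), ih]
    match m with
    | 0 => simp [Sig, cs]
    | 1 => simp [Sig, cs, H_two]; norm_num
    | (k+2) =>
      have h3 : H (k+3) = H (k+2) + 1/((k:ℝ)+3) := by
        rw [show (k:ℕ)+3 = (k+2)+1 from rfl, H_succ]; push_cast; ring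
      rw [show cs (k+3) = 5/2*((k:ℝ)+3) - 8/3 * H (k+3) + 1/18 from by
          simp only [cs, if_neg (by omega : ¬ k+3 ≤ 1), if_neg (by omega : ¬ k+3 = 2)]; push_cast; ring,
        show Sig (k+2) = 5/4*((k:ℝ)+2)^2 + 143/36*((k:ℝ)+2) + 1/18 - 8/3*((k:ℝ)+3)*H (k+2) from by
          simp only [Sig, if_neg (by omega : ¬ k+2 ≤ 1)]; push_cast; ring,
        show Sig (k+3) = 5/4*((k:ℝ)+3)^2 + 143/36*((k:ℝ)+3) + 1/18 - 8/3*((k:ℝ)+4)*H (k+3) from by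
          simp only [Sig, if_neg (by omega : ¬ k+3 ≤ 1)]; push_cast; ring,
        h3]
      have hk3 : ((k:ℝ)+3) ≠ 0 := by positivity
      field_simp
      ring

lemma LW' : ∀ m : ℕ, ∑ s ∈ Finset.Icc 1 m, ((m:ℝ)+1-(s:ℕ)) * cs s = WF (m+2) := by
  intro m
  induction m with
  | zero => simp [WF, cs, Psf]; norm_num
  | succ m ih =>
    rw [Finset.sum_Icc_succ_top (by omega)]
    have step : ∑ s ∈ Finset.Icc 1 m, (((m:ℕ):ℝ)+1+1-(s:ℕ)) * cs s
        = (∑ s ∈ Finset.Icc 1 m, ((m:ℝ)+1-(s:ℕ)) * cs s) + ∑ s ∈ Finset.Icc 1 m, cs s := by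
      rw [← Finset.sum_add_distrib]
      apply Finset.sum_congr rfl
      intro s _; ring
    push_cast
    rw [step, ih, Lsig]
    rw [show ((m:ℝ)+1+1 - ((m:ℝ)+1)) * cs (m+1) = cs (m+1) from by ring]
    -- goal: WF (m+2) + Sig m + cs (m+1) = WF (m+3)
    match m with
    | 0 =>
      simp [WF, Sig, cs, Psf]
      rw [show (3:ℕ) = 2+1 from rfl, H_succ, H_two]; norm_num
    | 1 =>
      have h3 : H 3 = 11/6 := by
        rw [show (3:ℕ) = 2+1 from rfl, H_succ, H_two]; norm_num
      have h4 : H 4 = 25/12 := by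
        rw [show (4:ℕ) = 3+1 from rfl, H_succ, h3]; norm_num
      simp [WF, Sig, cs, Psf, h3, h4]
      norm_num
    | (k+2) =>
      have h3 : H (k+3) = H (k+2) + 1/((k:ℝ)+3) := by
        rw [show (k:ℕ)+3 = (k+2)+1 from rfl, H_succ]; push_cast; ring
      have h4 : H (k+4) = H (k+2) + 1/((k:ℝ)+3) + 1/((k:ℝ)+4) := by
        rw [show (k:ℕ)+4 = (k+3)+1 from rfl, H_succ, h3]; push_cast; ring
      have h5 : H (k+5) = H (k+2) + 1/((k:ℝ)+3) + 1/((k:ℝ)+4) + 1/((k:ℝ)+5) := by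
        rw [show (k:ℕ)+5 = (k+4)+1 from rfl, H_succ, h4]; push_cast; ring
      rw [show cs (k+3) = 5/2*((k:ℝ)+3) - 8/3 * H (k+3) + 1/18 from by
          simp only [cs, if_neg (by omega : ¬ k+3 ≤ 1), if_neg (by omega : ¬ k+3 = 2)]
          push_cast; ring,
        show Sig (k+2) = 5/4*((k:ℝ)+2)^2 + 143/36*((k:ℝ)+2) + 1/18 - 8/3*((k:ℝ)+3)*H (k+2) from by
          simp only [Sig, if_neg (by omega : ¬ k+2 ≤ 1)]; push_cast; ring,
        show WF (k+4) = ((k:ℝ)+4)*((k:ℝ)+3)/2 * ((5/2*((k:ℝ)+4) - 8/3 * H (k+4) + 1/18) - (5/3*((k:ℝ)+4) - 7/3)) from by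
          simp only [WF, cs, Psf, if_neg (by omega : ¬ k+4 ≤ 1), if_neg (by omega : ¬ k+4 = 2)]
          push_cast; ring,
        show WF (k+5) = ((k:ℝ)+5)*((k:ℝ)+4)/2 * ((5/2*((k:ℝ)+5) - 8/3 * H (k+5) + 1/18) - (5/3*((k:ℝ)+5) - 7/3)) from by
          simp only [WF, cs, Psf, if_neg (by omega : ¬ k+5 ≤ 1), if_neg (by omega : ¬ k+5 = 2)]
          push_cast; ring,
        h5, h4, h3]
      have hk3 : ((k:ℝ)+3) ≠ 0 := by positivity
      have hk4 : ((k:ℝ)+4) ≠ 0 := by positivity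
      have hk5 : ((k:ℝ)+5) ≠ 0 := by positivity
      field_simp
      ring

lemma qs_unfold_one (P : ℕ → ℝ) (n : ℕ) (hn : 2 ≤ n) :
    qsCost P n 1 = P n + 2 / ((n : ℝ) * ((n : ℝ) - 1)) *
      (∑ s ∈ Finset.Icc 1 (n - 2), ((n : ℝ) - 1 - (s : ℕ)) * qsCost P s 1) := by
  rw [qsCost, if_neg (by omega)]
  have hB : (∑ m ∈ (Finset.Icc 1 (n - 2)).attach,
      ∑ s ∈ Finset.Icc (max 0 (1 - ((m : ℕ) : ℤ) - 1))
          (min ((1:ℤ) - 2) ((n : ℤ) - ((m : ℕ) : ℤ) - 2)),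
        qsCost P (m : ℕ) (1 - s - 1)) = 0 := by
    apply Finset.sum_eq_zero
    intro m _
    rw [Finset.Icc_eq_empty (by omega), Finset.sum_empty]
  rw [hB, show ((n : ℤ) - 1 + 1).toNat = n from by omega,
    show Finset.Icc n (n-2) = ∅ from Finset.Icc_eq_empty (by omega),
    Finset.attach_empty, Finset.sum_empty,
    show ((1:ℤ).toNat) = 1 from rfl,
    Finset.sum_attach (Finset.Icc 1 (n-2)) (fun s => ((n : ℝ) - 1 - (s : ℕ)) * qsCost P s 1)]
  ring

lemma qs_unfold_n (P : ℕ → ℝ) (n : ℕ) (hn : 2 ≤ n) :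
    qsCost P n (n : ℤ) = P n + 2 / ((n : ℝ) * ((n : ℝ) - 1)) *
      (∑ l ∈ Finset.Icc 1 (n - 2), ((n : ℝ) - 1 - (l : ℕ)) * qsCost P l 1) := by
  rw [qsCost, if_neg (by omega)]
  have hB : (∑ m ∈ (Finset.Icc 1 (n - 2)).attach,
      ∑ s ∈ Finset.Icc (max 0 ((n : ℤ) - ((m : ℕ) : ℤ) - 1))
          (min ((n : ℤ) - 2) ((n : ℤ) - ((m : ℕ) : ℤ) - 2)),
        qsCost P (m : ℕ) ((n : ℤ) - s - 1)) = 0 := by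
    apply Finset.sum_eq_zero
    intro m hm
    have := m.2
    simp only [Finset.mem_Icc] at this
    rw [Finset.Icc_eq_empty (by omega), Finset.sum_empty]
  rw [hB, show ((n : ℤ)).toNat = n from by omega,
    show Finset.Icc n (n-2) = ∅ from Finset.Icc_eq_empty (by omega),
    Finset.attach_empty, Finset.sum_empty,
    show ((n : ℤ) - (n:ℤ) + 1) = 1 from by ring,
    show ((1:ℤ).toNat) = 1 from rfl,
    Finset.sum_attach (Finset.Icc 1 (n-2)) (fun l => ((n : ℝ) - 1 - (l : ℕ)) * qsCost P l 1)]
  ring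

lemma Lc : ∀ n : ℕ, qsCost Psf n 1 = cs n := by
  intro n
  induction n using Nat.strong_induction_on with
  | _ n ih =>
    rcases le_or_gt n 1 with h | h
    · rw [qsCost, if_pos (Or.inl h)]
      simp only [cs, if_pos h]
    · have hn2 : 2 ≤ n := h
      rw [qs_unfold_one _ _ hn2]
      have hrw : (∑ s ∈ Finset.Icc 1 (n - 2), ((n : ℝ) - 1 - (s : ℕ)) * qsCost Psf s 1)
          = ∑ s ∈ Finset.Icc 1 (n - 2), ((n : ℝ) - 1 - (s : ℕ)) * cs s := by
        apply Finset.sum_congr rfl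
        intro s hs
        simp only [Finset.mem_Icc] at hs
        rw [ih s (by omega)]
      rw [hrw]
      obtain ⟨m, rfl⟩ : ∃ m, n = m + 2 := ⟨n - 2, by omega⟩
      have hrw2 : (∑ s ∈ Finset.Icc 1 (m + 2 - 2), (((m+2 : ℕ) : ℝ) - 1 - (s : ℕ)) * cs s)
          = ∑ s ∈ Finset.Icc 1 m, ((m : ℝ) + 1 - (s : ℕ)) * cs s := by
        rw [show m + 2 - 2 = m from by omega]
        apply Finset.sum_congr rfl
        intro s _
        push_cast; ring
      rw [hrw2, LW' m]
      simp only [WF]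
      have key : ∀ (x a b : ℝ), x ≠ 0 → a + 2 / x * (x / 2 * (b - a)) = b := by
        intro x a b hx; field_simp; ring
      apply key
      have hm : (0:ℝ) ≤ (m:ℝ) := Nat.cast_nonneg m
      push_cast
      nlinarith

/-- Exact cost of selecting the smallest (equivalently, the
largest) element with the strategy "smaller pivot first": for `n ≥ 3`,
`C(n,1) = C(n,n) = (5/2)n − (8/3)H_n + 1/18`. -/
theorem spf_smallest_exact (n : ℕ) (hn : 3 ≤ n) :
    qsCost Psf n 1 = qsCost Psf n (n : ℤ) ∧
    qsCost Psf n 1 = 5 / 2 * (n : ℝ) - 8 / 3 * H n + 1 / 18 := by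
  constructor
  · rw [qs_unfold_one _ _ (by omega), qs_unfold_n _ _ (by omega)]
  · rw [Lc n]
    simp only [cs, if_neg (by omega : ¬ n ≤ 1), if_neg (by omega : ¬ n = 2)]
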